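/- arXiv:2012.06107 — 2 statements merged into one kernel-verified Lean document; each statement's English description precedes it below -/
import Mathlib

section
/- For every real ν and every fixed t > 0, the incomplete modified Bessel function has the leading-order behavior (1/2)·∫_t^∞ exp(-x·cosh(τ))·cosh(ν·τ) dτ ~ cosh(ν·t)·exp(-x·cosh(t)) / (2·x·sinh(t)) as x → +∞; that is, the ratio of the integral to cosh(ν·t)·exp(-x·cosh(t))/(2·x·sinh(t)) tends to 1 as x tends to +∞. -/
open Real MeasureTheory Filter

namespace Stmt17Aux

open Set

lemma integral_exp_neg_mul_Ioi (c a : ℝ) (hc : 0 < c) :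
    ∫ x in Ioi a, Real.exp (-(c*x)) = Real.exp (-(c*a))/c := by
  have h : ∀ x ∈ Ici a, HasDerivAt (fun y => -Real.exp (-(c*y))/c) (Real.exp (-(c*x))) x := by
    intro x _
    have : HasDerivAt (fun y => -(c*y)) (-c) x := by
      exact (((hasDerivAt_id x).const_mul c).neg).congr_deriv (by ring)
    have := (this.exp).neg.div_const c
    exact this.congr_deriv (by field_simp)
  have htend : Tendsto (fun y => -Real.exp (-(c*y))/c) atTop (nhds 0) := by
    have h2 : Tendsto (fun y => -(c*y)) atTop atBot := by
      exact tendsto_neg_atTop_atBot.comp (tendsto_id.const_mul_atTop hc)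
    simpa using ((tendsto_exp_atBot.comp h2).neg.div_const c)
  have := MeasureTheory.integral_Ioi_of_hasDerivAt_of_tendsto'
    (f := fun y => -Real.exp (-(c*y))/c) (f' := fun x => Real.exp (-(c*x))) h
    ((exp_neg_integrableOn_Ioi a hc).congr_fun (by intro x hx; simp [neg_mul]) measurableSet_Ioi)
    htend
  rw [this]; ring

lemma cosh_lower (t τ : ℝ) (h : t ≤ τ) :
    Real.cosh t + Real.sinh t * (τ - t) ≤ Real.cosh τ := by
  have h1 : ∫ u in t..τ, Real.sinh u = Real.cosh τ - Real.cosh t := by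
    apply intervalIntegral.integral_eq_sub_of_hasDerivAt (fun u _ => Real.hasDerivAt_cosh u)
    exact Real.continuous_sinh.intervalIntegrable t τ
  have h2 : ∫ u in t..τ, Real.sinh t ≤ ∫ u in t..τ, Real.sinh u := by
    apply intervalIntegral.integral_mono_on h (intervalIntegrable_const)
      (Real.continuous_sinh.intervalIntegrable t τ)
    intro x hx
    exact Real.sinh_le_sinh.mpr hx.1
  simp only [intervalIntegral.integral_const, smul_eq_mul] at h2
  nlinarith

lemma cosh_upper (t τ b : ℝ) (h : t ≤ τ) (h2 : τ ≤ b) :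
    Real.cosh τ ≤ Real.cosh t + Real.sinh b * (τ - t) := by
  have h1 : ∫ u in t..τ, Real.sinh u = Real.cosh τ - Real.cosh t := by
    apply intervalIntegral.integral_eq_sub_of_hasDerivAt (fun u _ => Real.hasDerivAt_cosh u)
    exact Real.continuous_sinh.intervalIntegrable t τ
  have h3 : ∫ u in t..τ, Real.sinh u ≤ ∫ u in t..τ, Real.sinh b := by
    apply intervalIntegral.integral_mono_on h (Real.continuous_sinh.intervalIntegrable t τ)
      intervalIntegrable_const
    intro x hx
    exact Real.sinh_le_sinh.mpr (hx.2.trans h2)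
  simp only [intervalIntegral.integral_const, smul_eq_mul] at h3
  nlinarith

lemma tendsto_div_sub (ν : ℝ) : Tendsto (fun y : ℝ => y / (y - ν)) atTop (nhds 1) := by
  have h1 : Tendsto (fun y : ℝ => y - ν) atTop atTop := tendsto_atTop_add_const_right _ _ tendsto_id
  have h2 : Tendsto (fun y : ℝ => ν / (y - ν)) atTop (nhds 0) := tendsto_const_nhds.div_atTop h1
  have h3 : Tendsto (fun y : ℝ => 1 + ν / (y - ν)) atTop (nhds (1 + 0)) :=
    tendsto_const_nhds.add h2
  rw [add_zero] at h3
  apply h3.congr'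
  filter_upwards [eventually_gt_atTop (ν + 1)] with y hy
  have : y - ν ≠ 0 := by linarith
  field_simp
  ring

lemma sqrt_tendsto_atTop : Tendsto Real.sqrt atTop atTop := by
  apply tendsto_atTop_atTop.mpr
  intro b
  refine ⟨b^2 + 1, fun a ha => ?_⟩
  have h0 : (0:ℝ) ≤ b^2 + 1 := by positivity
  calc b ≤ Real.sqrt (b^2) := by
          rw [Real.sqrt_sq_eq_abs]; exact le_abs_self b
    _ ≤ Real.sqrt a := Real.sqrt_le_sqrt (by nlinarith)

end Stmt17Aux

open Stmt17Aux Set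

set_option maxHeartbeats 1000000 in
theorem stmt_17 (ν t : ℝ) (ht : 0 < t) :
    Tendsto (fun x : ℝ =>
        ((1/2) * ∫ τ in Set.Ioi t, Real.exp (-x * Real.cosh τ) * Real.cosh (ν * τ)) /
          (Real.cosh (ν*t) * Real.exp (-x * Real.cosh t) / (2 * x * Real.sinh t)))
      atTop (nhds 1) := by
  have hst : 0 < Real.sinh t := Real.sinh_pos_iff.mpr ht
  have hct : 0 < Real.cosh (ν * t) := Real.cosh_pos _
  set I : ℝ → ℝ := fun x => ∫ τ in Set.Ioi t, Real.exp (-x * Real.cosh τ) * Real.cosh (ν * τ)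
    with hI
  set g : ℝ → ℝ := fun x => x * Real.sinh t * Real.exp (x * Real.cosh t) * I x / Real.cosh (ν*t)
    with hg
  -- the target function eventually equals g
  have hev : ∀ᶠ x in atTop, ((1/2) * I x) /
      (Real.cosh (ν*t) * Real.exp (-x * Real.cosh t) / (2 * x * Real.sinh t)) = g x := by
    filter_upwards [eventually_gt_atTop 0] with x hx
    have he : Real.exp (-x * Real.cosh t) = (Real.exp (x * Real.cosh t))⁻¹ := by
      rw [← Real.exp_neg]; ring_nf
    rw [hg, he]
    have h1 : Real.exp (x * Real.cosh t) ≠ 0 := (Real.exp_pos _).ne'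
    field_simp
  apply Tendsto.congr' (EventuallyEq.symm hev)
  -- the eventual set of good x
  have hA : Tendsto (fun x : ℝ => x * Real.sinh t) atTop atTop :=
    tendsto_id.atTop_mul_const hst
  -- δ and b for the lower bound
  set δ : ℝ → ℝ := fun x => (Real.sqrt x)⁻¹ with hδ
  set L : ℝ → ℝ := fun x => Real.sinh t / Real.sinh (t + δ x) *
      (1 - Real.exp (-(x * Real.sinh (t + δ x) * δ x))) with hL
  set U : ℝ → ℝ := fun x => x * Real.sinh t *
      (Real.exp (ν*t)/(x*Real.sinh t - ν) + Real.exp (-(ν*t))/(x*Real.sinh t + ν)) /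
      (2*Real.cosh (ν*t)) with hU
  -- limit of L
  have hδ0 : Tendsto δ atTop (nhds 0) := tendsto_inv_atTop_zero.comp sqrt_tendsto_atTop
  have hsinhδ : Tendsto (fun x => Real.sinh (t + δ x)) atTop (nhds (Real.sinh t)) := by
    have : Tendsto (fun x => t + δ x) atTop (nhds (t + 0)) := tendsto_const_nhds.add hδ0
    rw [add_zero] at this
    exact (Real.continuous_sinh.tendsto _).comp this
  have hbδ : Tendsto (fun x => x * Real.sinh (t + δ x) * δ x) atTop atTop := by
    apply tendsto_atTop_mono' _ _ (sqrt_tendsto_atTop.atTop_mul_const hst)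
    filter_upwards [eventually_ge_atTop 1] with x hx
    have hsx : 0 < Real.sqrt x := Real.sqrt_pos.mpr (by linarith)
    have hδx : 0 < δ x := by simp [hδ]; positivity
    have h2 : Real.sinh t ≤ Real.sinh (t + δ x) := Real.sinh_le_sinh.mpr (by linarith)
    have hxe : x * δ x = Real.sqrt x := by
      rw [hδ]
      field_simp
      rw [Real.sq_sqrt (by linarith)]
    calc Real.sqrt x * Real.sinh t = x * δ x * Real.sinh t := by rw [hxe]
      _ ≤ x * Real.sinh (t + δ x) * δ x := by nlinarith
  have hLlim : Tendsto L atTop (nhds 1) := by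
    have h1 : Tendsto (fun x => Real.sinh t / Real.sinh (t + δ x)) atTop
        (nhds (Real.sinh t / Real.sinh t)) := tendsto_const_nhds.div hsinhδ hst.ne'
    rw [div_self hst.ne'] at h1
    have h2 : Tendsto (fun x => Real.exp (-(x * Real.sinh (t + δ x) * δ x))) atTop (nhds 0) :=
      Real.tendsto_exp_atBot.comp (tendsto_neg_atTop_atBot.comp hbδ)
    have h3 : Tendsto (fun x => Real.sinh t / Real.sinh (t + δ x) *
        (1 - Real.exp (-(x * Real.sinh (t + δ x) * δ x)))) atTop (nhds (1 * (1 - 0))) :=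
      h1.mul (tendsto_const_nhds.sub h2)
    norm_num at h3
    exact h3
  -- limit of U
  have hUlim : Tendsto U atTop (nhds 1) := by
    have h1 : Tendsto (fun x => x * Real.sinh t / (x * Real.sinh t - ν)) atTop (nhds 1) :=
      (tendsto_div_sub ν).comp hA
    have h2 : Tendsto (fun x => x * Real.sinh t / (x * Real.sinh t + ν)) atTop (nhds 1) := by
      have := (tendsto_div_sub (-ν)).comp hA
      simpa [sub_neg_eq_add, Function.comp_def] using this
    have h3 : Tendsto (fun x => (Real.exp (ν*t) * (x * Real.sinh t / (x * Real.sinh t - ν)) +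
        Real.exp (-(ν*t)) * (x * Real.sinh t / (x * Real.sinh t + ν))) / (2*Real.cosh (ν*t)))
        atTop (nhds ((Real.exp (ν*t) * 1 + Real.exp (-(ν*t)) * 1) / (2*Real.cosh (ν*t)))) := by
      exact (((tendsto_const_nhds.mul h1).add (tendsto_const_nhds.mul h2)).div tendsto_const_nhds
        (by positivity))
    have heq : (Real.exp (ν*t) * 1 + Real.exp (-(ν*t)) * 1) / (2*Real.cosh (ν*t)) = 1 := by
      rw [Real.cosh_eq]
      field_simp
    rw [heq] at h3
    apply h3.congr
    intro x
    rw [hU]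
    ring
  -- squeeze
  apply tendsto_of_tendsto_of_tendsto_of_le_of_le' hLlim hUlim
  · -- L ≤ g eventually
    filter_upwards [eventually_ge_atTop 1, hA.eventually_ge_atTop (|ν| + 1)] with x hx1 hxa
    have hx0 : (0:ℝ) < x := by linarith
    have hsx : 0 < Real.sqrt x := Real.sqrt_pos.mpr hx0
    have hδx : 0 < δ x := by simp only [hδ]; positivity
    have hlt : t < t + δ x := by linarith
    set b : ℝ := x * Real.sinh (t + δ x) with hb
    have hsb : 0 < Real.sinh (t + δ x) := Real.sinh_pos_iff.mpr (by linarith)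
    have hbpos : 0 < b := by positivity
    -- integrability of the integrand on Ioi t
    have hmeas : ∀ y : ℝ, Continuous (fun τ => Real.exp (-y * Real.cosh τ) * Real.cosh (ν * τ)) :=
      fun y => ((continuous_const.mul Real.continuous_cosh).rexp).mul
        (Real.continuous_cosh.comp (continuous_const.mul continuous_id))
    have haν : 0 < x * Real.sinh t - |ν| := by linarith
    -- dominating function
    have hint : IntegrableOn (fun τ => Real.exp (-x * Real.cosh τ) * Real.cosh (ν * τ))
        (Set.Ioi t) := by
      have hd : IntegrableOn
          (fun τ => Real.exp (-x*Real.cosh t + x*Real.sinh t*t) *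
            Real.exp (-((x * Real.sinh t - |ν|) * τ))) (Set.Ioi t) :=
        Integrable.const_mul ((exp_neg_integrableOn_Ioi t haν).congr_fun
          (by intro τ _; exact congrArg Real.exp (by ring)) measurableSet_Ioi) _
      apply hd.integrable.mono ((hmeas x).aestronglyMeasurable)
      filter_upwards [ae_restrict_mem measurableSet_Ioi] with τ hτ
      have hτt : t ≤ τ := le_of_lt hτ
      have h1 : Real.cosh t + Real.sinh t * (τ - t) ≤ Real.cosh τ := cosh_lower t τ hτt
      have h2 : Real.cosh (ν * τ) ≤ Real.exp (|ν| * τ) := by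
        have hca : Real.cosh (ν * τ) ≤ Real.exp |ν * τ| := by
          rw [← Real.cosh_abs, Real.cosh_eq]
          have h5 : Real.exp (-|ν * τ|) ≤ Real.exp |ν * τ| := by
            apply Real.exp_le_exp.mpr; linarith [abs_nonneg (ν * τ)]
          linarith
        calc Real.cosh (ν * τ) ≤ Real.exp |ν * τ| := hca
          _ ≤ Real.exp (|ν| * τ) := by
              apply Real.exp_le_exp.mpr
              rw [abs_mul, abs_of_pos (ht.trans hτ)]
      simp only [Real.norm_eq_abs]
      rw [abs_of_nonneg (by positivity : (0:ℝ) ≤ Real.exp (-x*Real.cosh t + x*Real.sinh t*t) *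
          Real.exp (-((x * Real.sinh t - |ν|) * τ))),
        abs_of_nonneg (by positivity : (0:ℝ) ≤ Real.exp (-x * Real.cosh τ) * Real.cosh (ν * τ))]
      calc Real.exp (-x * Real.cosh τ) * Real.cosh (ν * τ)
          ≤ Real.exp (-x * (Real.cosh t + Real.sinh t * (τ - t))) * Real.exp (|ν| * τ) := by
            apply mul_le_mul _ h2 (by positivity) (Real.exp_nonneg _)
            apply Real.exp_le_exp.mpr
            nlinarith
        _ = Real.exp (-x*Real.cosh t + x*Real.sinh t*t) *
            Real.exp (-((x * Real.sinh t - |ν|) * τ)) := by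
            rw [← Real.exp_add, ← Real.exp_add]; ring_nf
    -- lower bound by integral over Ioc t (t+δ)
    have step1 : ∫ τ in Set.Ioc t (t + δ x),
        Real.exp (-x * Real.cosh τ) * Real.cosh (ν * τ) ≤ I x := by
      apply setIntegral_mono_set hint
      · filter_upwards [] with τ; positivity
      · filter_upwards [] with τ hτ; exact hτ.1
    have step2 : ∫ τ in Set.Ioc t (t + δ x),
        Real.cosh (ν*t) * Real.exp (-(x * Real.cosh t) - b * (τ - t)) ≤
        ∫ τ in Set.Ioc t (t + δ x), Real.exp (-x * Real.cosh τ) * Real.cosh (ν * τ) := by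
      apply setIntegral_mono_on
      · apply Continuous.integrableOn_Ioc
        exact continuous_const.mul (((continuous_const.sub
          (continuous_const.mul (continuous_id.sub continuous_const))).rexp))
      · exact (hmeas x).integrableOn_Ioc
      · exact measurableSet_Ioc
      · intro τ hτ
        have hτ1 : t ≤ τ := le_of_lt hτ.1
        have hτ2 : τ ≤ t + δ x := hτ.2
        have hcu : Real.cosh τ ≤ Real.cosh t + Real.sinh (t + δ x) * (τ - t) :=
          cosh_upper t τ (t + δ x) hτ1 hτ2
        have hcc : Real.cosh (ν*t) ≤ Real.cosh (ν*τ) := by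
          apply Real.cosh_le_cosh.mpr
          rw [abs_mul, abs_mul]
          apply mul_le_mul_of_nonneg_left _ (abs_nonneg ν)
          rw [abs_of_pos ht, abs_of_pos (lt_of_lt_of_le ht hτ1)]
          exact hτ1
        have hee : Real.exp (-(x * Real.cosh t) - b * (τ - t)) ≤
            Real.exp (-x * Real.cosh τ) := by
          apply Real.exp_le_exp.mpr
          have : x * Real.cosh τ ≤ x * (Real.cosh t + Real.sinh (t + δ x) * (τ - t)) :=
            mul_le_mul_of_nonneg_left hcu (le_of_lt hx0)
          rw [hb]; nlinarith
        calc Real.cosh (ν*t) * Real.exp (-(x * Real.cosh t) - b * (τ - t))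
            ≤ Real.cosh (ν*τ) * Real.exp (-(x * Real.cosh t) - b * (τ - t)) :=
              mul_le_mul_of_nonneg_right hcc (Real.exp_nonneg _)
          _ ≤ Real.cosh (ν*τ) * Real.exp (-x * Real.cosh τ) :=
              mul_le_mul_of_nonneg_left hee ((Real.cosh_pos _).le)
          _ = Real.exp (-x * Real.cosh τ) * Real.cosh (ν * τ) := by ring
    -- compute the lower integral
    have step3 : ∫ τ in Set.Ioc t (t + δ x),
        Real.cosh (ν*t) * Real.exp (-(x * Real.cosh t) - b * (τ - t)) =
        Real.cosh (ν*t) * (Real.exp (-(x * Real.cosh t)) * (1 - Real.exp (-(b * δ x))) / b) := by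
      rw [← intervalIntegral.integral_of_le (le_of_lt hlt)]
      rw [intervalIntegral.integral_const_mul]
      have hFTC : ∫ τ in t..(t + δ x), Real.exp (-(x * Real.cosh t) - b * (τ - t)) =
          (fun τ => -Real.exp (-(x * Real.cosh t) - b * (τ - t)) / b) (t + δ x) -
          (fun τ => -Real.exp (-(x * Real.cosh t) - b * (τ - t)) / b) t := by
        apply intervalIntegral.integral_eq_sub_of_hasDerivAt
          (f := fun τ => -Real.exp (-(x * Real.cosh t) - b * (τ - t)) / b)
        · intro τ _
          have hin : HasDerivAt (fun y => -(x * Real.cosh t) - b * (y - t)) (-b) τ := by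
            simpa using (((hasDerivAt_id τ).sub_const t).const_mul b).const_sub
              (-(x * Real.cosh t))
          have := (hin.exp).neg.div_const b
          exact this.congr_deriv (by field_simp)
        · apply Continuous.intervalIntegrable
          exact (continuous_const.sub (continuous_const.mul (continuous_id.sub continuous_const))).rexp
      rw [hFTC]
      simp only
      rw [show -(x * Real.cosh t) - b * (t + δ x - t) = -(x * Real.cosh t) + -(b * δ x) by ring,
        show -(x * Real.cosh t) - b * (t - t) = -(x * Real.cosh t) by ring, Real.exp_add]
      field_simp
      ring
    -- combine
    show Real.sinh t / Real.sinh (t + δ x) * (1 - Real.exp (-(x * Real.sinh (t + δ x) * δ x))) ≤ x * Real.sinh t * Real.exp (x * Real.cosh t) * I x / Real.cosh (ν*t)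
    have key : Real.cosh (ν*t) * (Real.exp (-(x * Real.cosh t)) *
        (1 - Real.exp (-(b * δ x))) / b) ≤ I x := by
      calc _ = ∫ τ in Set.Ioc t (t + δ x),
            Real.cosh (ν*t) * Real.exp (-(x * Real.cosh t) - b * (τ - t)) := step3.symm
        _ ≤ _ := le_trans step2 step1
    have hmul : 0 < x * Real.sinh t * Real.exp (x * Real.cosh t) / Real.cosh (ν*t) := by
      positivity
    calc Real.sinh t / Real.sinh (t + δ x) * (1 - Real.exp (-(x * Real.sinh (t + δ x) * δ x)))
          = x * Real.sinh t * Real.exp (x * Real.cosh t) *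
            (Real.cosh (ν*t) * (Real.exp (-(x * Real.cosh t)) * (1 - Real.exp (-(b * δ x))) / b))
            / Real.cosh (ν*t) := by
            rw [hb]
            rw [Real.exp_neg (x * Real.cosh t)]
            field_simp
        _ ≤ x * Real.sinh t * Real.exp (x * Real.cosh t) * I x / Real.cosh (ν*t) := by
            apply div_le_div_of_nonneg_right _ hct.le
            apply mul_le_mul_of_nonneg_left key (by positivity)
  · -- g ≤ U eventually
    filter_upwards [eventually_ge_atTop 1, hA.eventually_ge_atTop (|ν| + 1)] with x hx1 hxa
    have hx0 : (0:ℝ) < x := by linarith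
    have haν : 0 < x * Real.sinh t - |ν| := by linarith
    have haν1 : 0 < x * Real.sinh t - ν := by
      have := le_abs_self ν; linarith
    have haν2 : 0 < x * Real.sinh t + ν := by
      have := neg_abs_le ν; linarith
    set a : ℝ := x * Real.sinh t with ha
    set G : ℝ → ℝ := fun τ => (Real.exp (-(x*Real.cosh t) + a*t)/2) *
        (Real.exp (-((a-ν)*τ)) + Real.exp (-((a+ν)*τ))) with hG
    have hGint : IntegrableOn G (Set.Ioi t) := by
      apply Integrable.const_mul
      apply Integrable.add
      · exact (exp_neg_integrableOn_Ioi t haν1).congr_fun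
          (by intro τ _; exact congrArg Real.exp (by ring)) measurableSet_Ioi
      · exact (exp_neg_integrableOn_Ioi t haν2).congr_fun
          (by intro τ _; exact congrArg Real.exp (by ring)) measurableSet_Ioi
    have hmeas : Continuous (fun τ => Real.exp (-x * Real.cosh τ) * Real.cosh (ν * τ)) :=
      ((continuous_const.mul Real.continuous_cosh).rexp).mul
        (Real.continuous_cosh.comp (continuous_const.mul continuous_id))
    have hfG : ∀ τ ∈ Set.Ioi t, Real.exp (-x * Real.cosh τ) * Real.cosh (ν * τ) ≤ G τ := by
      intro τ hτ
      have hτt : t ≤ τ := le_of_lt hτ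
      have h1 : Real.cosh t + Real.sinh t * (τ - t) ≤ Real.cosh τ := cosh_lower t τ hτt
      have h2 : Real.exp (-x * Real.cosh τ) ≤ Real.exp (-(x*Real.cosh t) - a*(τ - t)) := by
        apply Real.exp_le_exp.mpr
        have : x * (Real.cosh t + Real.sinh t * (τ - t)) ≤ x * Real.cosh τ :=
          mul_le_mul_of_nonneg_left h1 (le_of_lt hx0)
        rw [ha]; nlinarith
      calc Real.exp (-x * Real.cosh τ) * Real.cosh (ν * τ)
          ≤ Real.exp (-(x*Real.cosh t) - a*(τ - t)) * Real.cosh (ν * τ) :=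
            mul_le_mul_of_nonneg_right h2 ((Real.cosh_pos _).le)
        _ = G τ := by
            rw [hG, Real.cosh_eq (ν*τ)]
            calc Real.exp (-(x*Real.cosh t) - a*(τ - t)) * ((Real.exp (ν*τ) + Real.exp (-(ν*τ)))/2)
                = (Real.exp (-(x*Real.cosh t) - a*(τ - t)) * Real.exp (ν*τ) +
                   Real.exp (-(x*Real.cosh t) - a*(τ - t)) * Real.exp (-(ν*τ)))/2 := by ring
              _ = (Real.exp ((-(x*Real.cosh t) - a*(τ - t)) + ν*τ) +
                   Real.exp ((-(x*Real.cosh t) - a*(τ - t)) + -(ν*τ)))/2 := by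
                  rw [← Real.exp_add, ← Real.exp_add]
              _ = (Real.exp ((-(x*Real.cosh t) + a*t) + -((a-ν)*τ)) +
                   Real.exp ((-(x*Real.cosh t) + a*t) + -((a+ν)*τ)))/2 := by
                  rw [show (-(x*Real.cosh t) - a*(τ - t)) + ν*τ =
                    (-(x*Real.cosh t) + a*t) + -((a-ν)*τ) by ring,
                    show (-(x*Real.cosh t) - a*(τ - t)) + -(ν*τ) =
                    (-(x*Real.cosh t) + a*t) + -((a+ν)*τ) by ring]
              _ = (fun τ => Real.exp (-(x*Real.cosh t) + a*t)/2 *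
                    (Real.exp (-((a-ν)*τ)) + Real.exp (-((a+ν)*τ)))) τ := by
                  simp only [Real.exp_add]
                  ring
    have hfint : IntegrableOn (fun τ => Real.exp (-x * Real.cosh τ) * Real.cosh (ν * τ))
        (Set.Ioi t) := by
      apply hGint.integrable.mono hmeas.aestronglyMeasurable
      filter_upwards [ae_restrict_mem measurableSet_Ioi] with τ hτ
      rw [Real.norm_eq_abs, Real.norm_eq_abs,
        abs_of_nonneg (by positivity : (0:ℝ) ≤ Real.exp (-x * Real.cosh τ) * Real.cosh (ν * τ))]
      exact le_trans (hfG τ hτ) (le_abs_self _)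
    have hIG : I x ≤ ∫ τ in Set.Ioi t, G τ := by
      apply setIntegral_mono_on hfint hGint measurableSet_Ioi hfG
    have hGval : ∫ τ in Set.Ioi t, G τ = (Real.exp (-(x*Real.cosh t) + a*t)/2) *
        (Real.exp (-((a-ν)*t))/(a-ν) + Real.exp (-((a+ν)*t))/(a+ν)) := by
      rw [hG]
      rw [MeasureTheory.integral_const_mul]
      rw [MeasureTheory.integral_add
        ((exp_neg_integrableOn_Ioi t haν1).congr_fun
          (by intro τ _; exact congrArg Real.exp (by ring)) measurableSet_Ioi)
        ((exp_neg_integrableOn_Ioi t haν2).congr_fun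
          (by intro τ _; exact congrArg Real.exp (by ring)) measurableSet_Ioi)]
      rw [integral_exp_neg_mul_Ioi _ _ haν1, integral_exp_neg_mul_Ioi _ _ haν2]
    show x * Real.sinh t * Real.exp (x * Real.cosh t) * I x / Real.cosh (ν*t) ≤ x * Real.sinh t * (Real.exp (ν*t)/(x*Real.sinh t - ν) + Real.exp (-(ν*t))/(x*Real.sinh t + ν)) / (2*Real.cosh (ν*t))
    calc x * Real.sinh t * Real.exp (x * Real.cosh t) * I x / Real.cosh (ν*t)
        ≤ x * Real.sinh t * Real.exp (x * Real.cosh t) * ((Real.exp (-(x*Real.cosh t) + a*t)/2) *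
          (Real.exp (-((a-ν)*t))/(a-ν) + Real.exp (-((a+ν)*t))/(a+ν))) / Real.cosh (ν*t) := by
          apply div_le_div_of_nonneg_right _ hct.le
          apply mul_le_mul_of_nonneg_left (le_trans hIG (le_of_eq hGval)) (by positivity)
      _ = x * Real.sinh t * (Real.exp (ν*t)/(x*Real.sinh t - ν) +
          Real.exp (-(ν*t))/(x*Real.sinh t + ν)) / (2*Real.cosh (ν*t)) := by
          rw [ha]
          rw [show Real.exp (-(x*Real.cosh t) + x*Real.sinh t*t) =
            Real.exp (-(x*Real.cosh t)) * Real.exp (x*Real.sinh t*t) from by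
              rw [← Real.exp_add]]
          rw [show Real.exp (-((x*Real.sinh t-ν)*t)) =
            Real.exp (-(x*Real.sinh t*t)) * Real.exp (ν*t) from by
              rw [← Real.exp_add]; ring_nf]
          rw [show Real.exp (-((x*Real.sinh t+ν)*t)) =
            Real.exp (-(x*Real.sinh t*t)) * Real.exp (-(ν*t)) from by
              rw [← Real.exp_add]; ring_nf]
          rw [Real.exp_neg (x * Real.cosh t), Real.exp_neg (x*Real.sinh t*t)]
          field_simp
end

section
/- For every fixed t > 0, the Shu function of order 0 satisfies S_0(x,t) / ( -ln(x) ) → 1 as x → 0⁺. -/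
open Real MeasureTheory Filter

/-- The Shu function `S_ν(x,t) = (1/2)(x/2)^ν ∫_0^t τ^{-(ν+1)} e^{-τ - x²/(4τ)} dτ`. -/
noncomputable def shu (ν x t : ℝ) : ℝ :=
  (1/2) * (x/2) ^ ν * ∫ τ in (0:ℝ)..t, τ ^ (-(ν+1)) * Real.exp (-τ - x^2 / (4*τ))

open intervalIntegral

noncomputable def f (x τ : ℝ) : ℝ := τ ^ (-1:ℝ) * Real.exp (-τ - x^2 / (4*τ))

lemma exp_neg_le_inv {z : ℝ} (hz : 0 < z) : Real.exp (-z) ≤ z⁻¹ := by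
  rw [Real.exp_neg]
  have h1 : z ≤ Real.exp z := by linarith [Real.add_one_le_exp z]
  exact inv_anti₀ hz h1

lemma f_nonneg {x τ : ℝ} (hτ : 0 ≤ τ) : 0 ≤ f x τ :=
  mul_nonneg (Real.rpow_nonneg hτ _) (Real.exp_nonneg _)

lemma f_le {x τ : ℝ} (hx : 0 < x) (hτ : 0 ≤ τ) : f x τ ≤ 4 / x^2 := by
  rcases eq_or_lt_of_le hτ with h | hτ
  · subst h
    simp only [f, Real.zero_rpow (by norm_num : (-1:ℝ) ≠ 0), zero_mul]
    positivity
  · have h1 : Real.exp (-τ - x^2/(4*τ)) ≤ (x^2/(4*τ))⁻¹ := by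
      calc Real.exp (-τ - x^2/(4*τ)) ≤ Real.exp (-(x^2/(4*τ))) :=
            Real.exp_le_exp.2 (by linarith)
        _ ≤ _ := exp_neg_le_inv (by positivity)
    calc f x τ ≤ τ⁻¹ * (x^2/(4*τ))⁻¹ := by
          rw [f, Real.rpow_neg_one]
          exact mul_le_mul_of_nonneg_left h1 (inv_nonneg.2 hτ.le)
      _ = 4 / x^2 := by field_simp

lemma meas_f (x : ℝ) : Measurable (f x) := by
  unfold f; fun_prop

lemma integrableOn_f {x t : ℝ} (hx : 0 < x) : IntegrableOn (f x) (Set.Ioc 0 t) := by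
  apply Integrable.mono' (g := fun _ => 4 / x^2)
  · exact integrableOn_const measure_Ioc_lt_top.ne
  · exact (meas_f x).aestronglyMeasurable
  · filter_upwards [ae_restrict_mem measurableSet_Ioc] with τ hτ
    rw [Real.norm_eq_abs, abs_of_nonneg (f_nonneg hτ.1.le)]
    exact f_le hx hτ.1.le

lemma ii_f {x : ℝ} (hx : 0 < x) {a b : ℝ} (hab : a ≤ b) (ha : 0 ≤ a) :
    IntervalIntegrable (f x) volume a b := by
  rw [intervalIntegrable_iff_integrableOn_Ioc_of_le hab]
  exact (integrableOn_f hx (t := b)).mono_set (Set.Ioc_subset_Ioc ha le_rfl)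

lemma f_sub_inv_le {x τ : ℝ} (hx : 0 < x) (hτ : 0 < τ) :
    |f x τ - τ⁻¹| ≤ 1 + x^2/(4*τ^2) := by
  have hg : (0:ℝ) ≤ τ + x^2/(4*τ) := by positivity
  have he1 : Real.exp (-τ - x^2/(4*τ)) ≤ 1 := by
    rw [show -τ - x^2/(4*τ) = -(τ + x^2/(4*τ)) by ring]
    exact Real.exp_le_one_iff.2 (by linarith)
  have he2 : 1 - (τ + x^2/(4*τ)) ≤ Real.exp (-τ - x^2/(4*τ)) := by
    rw [show -τ - x^2/(4*τ) = -(τ + x^2/(4*τ)) by ring]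
    linarith [Real.add_one_le_exp (-(τ + x^2/(4*τ)))]
  have hfe : f x τ - τ⁻¹ = τ⁻¹ * (Real.exp (-τ - x^2/(4*τ)) - 1) := by
    rw [f, Real.rpow_neg_one]; ring
  rw [hfe, abs_mul, abs_of_nonneg (inv_nonneg.2 hτ.le), abs_of_nonpos (by linarith)]
  calc τ⁻¹ * -(Real.exp (-τ - x^2/(4*τ)) - 1) ≤ τ⁻¹ * (τ + x^2/(4*τ)) :=
        mul_le_mul_of_nonneg_left (by linarith) (inv_nonneg.2 hτ.le)
    _ = 1 + x^2/(4*τ^2) := by field_simp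

lemma int_inv_sq {a b : ℝ} (ha : 0 < a) (hab : a ≤ b) :
    ∫ τ in a..b, (τ^2)⁻¹ = a⁻¹ - b⁻¹ := by
  have h : ∀ τ ∈ Set.uIcc a b, HasDerivAt (fun y : ℝ => -(y⁻¹)) ((τ^2)⁻¹) τ := by
    intro τ hτ
    rw [Set.uIcc_of_le hab] at hτ
    have hτ0 : τ ≠ 0 := (lt_of_lt_of_le ha hτ.1).ne'
    simpa using (hasDerivAt_inv hτ0).fun_neg
  have hii : IntervalIntegrable (fun τ : ℝ => (τ^2)⁻¹) volume a b := by
    apply ContinuousOn.intervalIntegrable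
    apply ContinuousOn.inv₀ (by fun_prop)
    intro τ hτ
    rw [Set.uIcc_of_le hab] at hτ
    have h0 : 0 < τ := lt_of_lt_of_le ha hτ.1
    positivity
  rw [intervalIntegral.integral_eq_sub_of_hasDerivAt h hii]
  ring

lemma ii_inv_sq {a b : ℝ} (ha : 0 < a) (hab : a ≤ b) :
    IntervalIntegrable (fun τ : ℝ => (τ^2)⁻¹) volume a b := by
  apply ContinuousOn.intervalIntegrable
  apply ContinuousOn.inv₀ (by fun_prop)
  intro τ hτ
  rw [Set.uIcc_of_le hab] at hτ
  have h0 : 0 < τ := lt_of_lt_of_le ha hτ.1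
  positivity

lemma key {t x : ℝ} (ht : 0 < t) (hx : 0 < x) (hx2 : x^2 ≤ t) :
    |(∫ τ in (0:ℝ)..t, f x τ) - (Real.log t - 2 * Real.log x)| ≤ 4 + t + 1/4 := by
  have hx2pos : 0 < x^2 := by positivity
  have hii1 : IntervalIntegrable (f x) volume 0 (x^2) := ii_f hx hx2pos.le le_rfl
  have hii2 : IntervalIntegrable (f x) volume (x^2) t := ii_f hx hx2 hx2pos.le
  have hsplit : (∫ τ in (0:ℝ)..t, f x τ)
      = (∫ τ in (0:ℝ)..x^2, f x τ) + ∫ τ in (x^2)..t, f x τ :=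
    (integral_add_adjacent_intervals hii1 hii2).symm
  have hA0 : 0 ≤ ∫ τ in (0:ℝ)..x^2, f x τ :=
    intervalIntegral.integral_nonneg hx2pos.le (fun τ hτ => f_nonneg hτ.1)
  have hA4 : (∫ τ in (0:ℝ)..x^2, f x τ) ≤ 4 := by
    calc (∫ τ in (0:ℝ)..x^2, f x τ) ≤ ∫ _ in (0:ℝ)..x^2, 4/x^2 :=
          intervalIntegral.integral_mono_on hx2pos.le hii1 intervalIntegrable_const
            (fun τ hτ => f_le hx hτ.1)
      _ = 4 := by rw [intervalIntegral.integral_const, smul_eq_mul, sub_zero]; field_simp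
  have hinv_ii : IntervalIntegrable (fun τ : ℝ => τ⁻¹) volume (x^2) t := by
    apply ContinuousOn.intervalIntegrable
    apply ContinuousOn.inv₀ (by fun_prop)
    intro τ hτ
    rw [Set.uIcc_of_le hx2] at hτ
    exact (lt_of_lt_of_le hx2pos hτ.1).ne'
  have hL : (∫ τ in (x^2)..t, τ⁻¹) = Real.log t - 2 * Real.log x := by
    rw [integral_inv_of_pos hx2pos ht, Real.log_div ht.ne' hx2pos.ne', Real.log_pow]
    push_cast; ring
  have hb_ii : IntervalIntegrable (fun τ : ℝ => 1 + x^2/(4*τ^2)) volume (x^2) t := by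
    apply ContinuousOn.intervalIntegrable
    apply continuousOn_const.add
    apply ContinuousOn.div continuousOn_const (by fun_prop)
    intro τ hτ
    rw [Set.uIcc_of_le hx2] at hτ
    have h0 : 0 < τ := lt_of_lt_of_le hx2pos hτ.1
    positivity
  have hbval : (∫ τ in (x^2)..t, (1 + x^2/(4*τ^2)))
      = (t - x^2) + (x^2/4) * ((x^2)⁻¹ - t⁻¹) := by
    have h1 : ∀ τ : ℝ, 1 + x^2/(4*τ^2) = 1 + (x^2/4) * (τ^2)⁻¹ := by
      intro τ; rw [div_eq_mul_inv, div_eq_mul_inv, mul_inv]; ring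
    simp_rw [h1]
    rw [intervalIntegral.integral_add intervalIntegrable_const
        ((ii_inv_sq hx2pos hx2).const_mul _),
      intervalIntegral.integral_const, intervalIntegral.integral_const_mul,
      int_inv_sq hx2pos hx2, smul_eq_mul, mul_one]
  have hD : |(∫ τ in (x^2)..t, f x τ) - (Real.log t - 2 * Real.log x)| ≤ t + 1/4 := by
    rw [← hL, ← intervalIntegral.integral_sub hii2 hinv_ii]
    calc |∫ τ in (x^2)..t, (f x τ - τ⁻¹)|
        ≤ ∫ τ in (x^2)..t, |f x τ - τ⁻¹| :=
          intervalIntegral.abs_integral_le_integral_abs hx2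
      _ ≤ ∫ τ in (x^2)..t, (1 + x^2/(4*τ^2)) :=
          intervalIntegral.integral_mono_on hx2 (hii2.sub hinv_ii).abs hb_ii
            (fun τ hτ => f_sub_inv_le hx (lt_of_lt_of_le hx2pos hτ.1))
      _ = (t - x^2) + (x^2/4) * ((x^2)⁻¹ - t⁻¹) := hbval
      _ ≤ t + 1/4 := by
          have h2 : (x^2/4) * (x^2)⁻¹ = 1/4 := by field_simp
          have h3 : 0 ≤ (x^2/4) * t⁻¹ := by positivity
          nlinarith
  rw [hsplit, show (∫ τ in (0:ℝ)..x^2, f x τ) + (∫ τ in (x^2)..t, f x τ)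
      - (Real.log t - 2 * Real.log x)
      = (∫ τ in (0:ℝ)..x^2, f x τ)
        + ((∫ τ in (x^2)..t, f x τ) - (Real.log t - 2 * Real.log x)) by ring]
  calc |(∫ τ in (0:ℝ)..x^2, f x τ)
        + ((∫ τ in (x^2)..t, f x τ) - (Real.log t - 2 * Real.log x))|
      ≤ |∫ τ in (0:ℝ)..x^2, f x τ|
        + |(∫ τ in (x^2)..t, f x τ) - (Real.log t - 2 * Real.log x)| := abs_add_le _ _
    _ ≤ 4 + (t + 1/4) := add_le_add (by rw [abs_of_nonneg hA0]; exact hA4) hD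
    _ = 4 + t + 1/4 := by ring

lemma shu_zero (x t : ℝ) : shu 0 x t = (1/2) * ∫ τ in (0:ℝ)..t, f x τ := by
  unfold shu f
  norm_num

theorem stmt_18 (t : ℝ) (ht : 0 < t) :
    Tendsto (fun x : ℝ => shu 0 x t / (-Real.log x))
      (nhdsWithin 0 (Set.Ioi 0)) (nhds 1) := by
  set C : ℝ := (4 + t + 1/4 + |Real.log t|)/2 with hC
  have hδ : (0:ℝ) < min 1 (Real.sqrt t) := lt_min one_pos (Real.sqrt_pos.2 ht)
  have hev : ∀ᶠ x in nhdsWithin (0:ℝ) (Set.Ioi 0),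
      ‖shu 0 x t / (-Real.log x) - 1‖ ≤ C / (-Real.log x) := by
    filter_upwards [Ioo_mem_nhdsGT_of_mem (Set.mem_Ico.2 ⟨le_refl 0, hδ⟩)] with x hx
    obtain ⟨hx0, hxδ⟩ := hx
    have hx1 : x < 1 := lt_of_lt_of_le hxδ (min_le_left _ _)
    have hxt : x^2 ≤ t := by
      have hxs : x < Real.sqrt t := lt_of_lt_of_le hxδ (min_le_right _ _)
      nlinarith [Real.sq_sqrt ht.le, Real.sqrt_nonneg t]
    have hlog : Real.log x < 0 := Real.log_neg hx0 hx1
    have hlogpos : 0 < -Real.log x := by linarith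
    have hkey := key ht hx0 hxt
    have habs : |(∫ τ in (0:ℝ)..t, f x τ) + 2 * Real.log x|
        ≤ 4 + t + 1/4 + |Real.log t| := by
      have h1 : (∫ τ in (0:ℝ)..t, f x τ) + 2 * Real.log x
          = ((∫ τ in (0:ℝ)..t, f x τ) - (Real.log t - 2 * Real.log x)) + Real.log t := by
        ring
      rw [h1]
      calc |((∫ τ in (0:ℝ)..t, f x τ) - (Real.log t - 2 * Real.log x)) + Real.log t|
          ≤ |(∫ τ in (0:ℝ)..t, f x τ) - (Real.log t - 2 * Real.log x)| + |Real.log t| :=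
            abs_add_le _ _
        _ ≤ 4 + t + 1/4 + |Real.log t| := by linarith
    have heq : shu 0 x t / (-Real.log x) - 1
        = ((1/2) * ((∫ τ in (0:ℝ)..t, f x τ) + 2 * Real.log x)) / (-Real.log x) := by
      rw [shu_zero]
      field_simp
      rw [add_div, mul_div_assoc, div_self hlog.ne]
      ring_nf
    rw [heq, Real.norm_eq_abs, abs_div, abs_of_pos hlogpos]
    gcongr
    rw [abs_mul, abs_of_nonneg (by norm_num : (0:ℝ) ≤ 1/2), hC]
    linarith
  have h1 : Tendsto (fun x : ℝ => -Real.log x) (nhdsWithin (0:ℝ) (Set.Ioi 0)) atTop :=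
    tendsto_neg_atBot_atTop.comp Real.tendsto_log_nhdsGT_zero
  have h2 : Tendsto (fun x : ℝ => C / (-Real.log x)) (nhdsWithin (0:ℝ) (Set.Ioi 0)) (nhds 0) :=
    Tendsto.div_atTop tendsto_const_nhds h1
  have h3 : Tendsto (fun x : ℝ => shu 0 x t / (-Real.log x) - 1)
      (nhdsWithin (0:ℝ) (Set.Ioi 0)) (nhds 0) := squeeze_zero_norm' hev h2
  have h4 := h3.add_const 1
  simpa using h4
end
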